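/- Let s ↦ Λ(s) be a differentiable family of unit vectors in ℂ² ⊗ H, ρ(s) = tr_H |Λ(s)⟩⟨Λ(s)| the reduced density matrix on ℂ², and 𝔄(s) ∈ M₂(ℂ) any operator-valued function satisfying 𝔄 ρ = −i tr_H |Λ'⟩⟨Λ|. If u(s) ∈ M₂(ℂ) solves u' = −i u 𝔄 with u(0) = id, then u(s) ρ(s) u(s)† = ρ(0) for all s; in particular tr(ρ(s) u(s)† u(s)) = 1, i.e. u(s) is 'almost surely unitary' with respect to ρ(s). -/

import Mathlib

open Matrix

noncomputable section

variable {H : Type*} [NormedAddCommGroup H] [InnerProductSpace ℂ H] [CompleteSpace H]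

/-- Partial trace over H of the rank-one operator |Φ⟩⟨Ψ| on ℂ² ⊗ H ≅ H ⊕ H:
(tr_H |Φ⟩⟨Ψ|)_{jk} = ⟨Ψ_k | Φ_j⟩. -/
def PT (Φ Ψ : PiLp 2 fun _ : Fin 2 => H) : Matrix (Fin 2) (Fin 2) ℂ :=
  Matrix.of fun j k => (inner ℂ (Ψ k) (Φ j) : ℂ)

private lemma PT_conjTranspose (Φ Ψ : PiLp 2 fun _ : Fin 2 => H) :
    (PT Φ Ψ)ᴴ = PT Ψ Φ := by
  ext j k
  simp [PT, Matrix.conjTranspose_apply, inner_conj_symm]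

private lemma hasDerivAt_mul_entry {A B : ℝ → Matrix (Fin 2) (Fin 2) ℂ}
    {A' B' : Matrix (Fin 2) (Fin 2) ℂ} {s : ℝ}
    (hA : ∀ j k, HasDerivAt (fun t => A t j k) (A' j k) s)
    (hB : ∀ j k, HasDerivAt (fun t => B t j k) (B' j k) s)
    (j k : Fin 2) :
    HasDerivAt (fun t => (A t * B t) j k) ((A' * B s + A s * B') j k) s := by
  simp only [Matrix.mul_apply, Matrix.add_apply, ← Finset.sum_add_distrib]
  exact HasDerivAt.fun_sum fun a _ => (hA j a).mul (hB a k)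

/-- For a differentiable family of unit vectors Λ(s) in ℂ² ⊗ H with reduced
density matrix ρ(s) = tr_H|Λ(s)⟩⟨Λ(s)|, if 𝔄(s) satisfies 𝔄ρ = −i tr_H|Λ'⟩⟨Λ| and u(s)
solves u' = −i u 𝔄 with u(0) = id, then u(s)ρ(s)u(s)† = ρ(0) for all s; in particular
tr(ρ(s) u(s)† u(s)) = 1, i.e. u(s) is almost surely unitary with respect to ρ(s). -/
theorem stmt14 (Λ Λd : ℝ → PiLp 2 fun _ : Fin 2 => H)
    (hΛ : ∀ s, HasDerivAt Λ (Λd s) s) (hnorm : ∀ s, ‖Λ s‖ = 1)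
    (𝔄 u : ℝ → Matrix (Fin 2) (Fin 2) ℂ)
    (h𝔄 : ∀ s, 𝔄 s * PT (Λ s) (Λ s) = (-Complex.I) • PT (Λd s) (Λ s))
    (hu0 : u 0 = 1)
    (hu : ∀ s j k, HasDerivAt (fun s' => u s' j k) (((-Complex.I) • (u s * 𝔄 s)) j k) s) :
    ∀ s : ℝ,
      u s * PT (Λ s) (Λ s) * (u s)ᴴ = PT (Λ 0) (Λ 0) ∧
      Matrix.trace (PT (Λ s) (Λ s) * ((u s)ᴴ * u s)) = 1 := by
  have hcomp : ∀ (i : Fin 2) (s : ℝ), HasDerivAt (fun t => Λ t i) (Λd s i) s := by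
    intro i s
    have := ((PiLp.proj (𝕜 := ℝ) 2 (fun _ : Fin 2 => H) i).hasFDerivAt
      (x := Λ s)).comp_hasDerivAt s (hΛ s)
    exact this
  have hρ : ∀ (s : ℝ) (j k : Fin 2), HasDerivAt (fun t => PT (Λ t) (Λ t) j k)
      ((PT (Λd s) (Λ s) + PT (Λ s) (Λd s)) j k) s := by
    intro s j k
    have hd := HasDerivAt.inner (𝕜 := ℂ) (E := H) (hcomp k s) (hcomp j s)
    simpa [PT, Matrix.add_apply, add_comm] using hd
  have huct : ∀ (s : ℝ) (j k : Fin 2), HasDerivAt (fun t => (u t)ᴴ j k)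
      ((((-Complex.I) • (u s * 𝔄 s))ᴴ) j k) s := by
    intro s j k
    simpa [Matrix.conjTranspose_apply] using (hu s k j).star
  -- the derivative of s ↦ u s ρ s (u s)ᴴ vanishes
  have hG : ∀ (s : ℝ) (j k : Fin 2),
      HasDerivAt (fun t => (u t * PT (Λ t) (Λ t) * (u t)ᴴ) j k) 0 s := by
    intro s j k
    have h1 := hasDerivAt_mul_entry (A := fun t => u t * PT (Λ t) (Λ t))
      (B := fun t => (u t)ᴴ)
      (A' := ((-Complex.I) • (u s * 𝔄 s)) * PT (Λ s) (Λ s)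
        + u s * (PT (Λd s) (Λ s) + PT (Λ s) (Λd s)))
      (B' := ((-Complex.I) • (u s * 𝔄 s))ᴴ)
      (fun j k => hasDerivAt_mul_entry (hu s) (hρ s) j k) (huct s) j k
    have key : PT (Λd s) (Λ s) = Complex.I • (𝔄 s * PT (Λ s) (Λ s)) := by
      rw [h𝔄 s, smul_smul]
      simp [Complex.I_mul_I]
    have herm : (PT (Λ s) (Λ s))ᴴ = PT (Λ s) (Λ s) := PT_conjTranspose _ _
    have hΛΛd : PT (Λ s) (Λd s) = (-Complex.I) • (PT (Λ s) (Λ s) * (𝔄 s)ᴴ) := by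
      rw [← PT_conjTranspose, key]
      simp [Matrix.conjTranspose_smul, Matrix.conjTranspose_mul, herm, Complex.star_def]
    have hzero :
        (((-Complex.I) • (u s * 𝔄 s)) * PT (Λ s) (Λ s)
            + u s * (PT (Λd s) (Λ s) + PT (Λ s) (Λd s))) * (u s)ᴴ
          + (u s * PT (Λ s) (Λ s)) * ((-Complex.I) • (u s * 𝔄 s))ᴴ = 0 := by
      rw [key, hΛΛd]
      simp only [Matrix.conjTranspose_smul, Matrix.conjTranspose_mul, Complex.star_def,
        map_neg, Complex.conj_I, neg_neg, Matrix.smul_mul, Matrix.mul_smul,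
        Matrix.add_mul, Matrix.mul_add, Matrix.mul_assoc]
      module
    rw [hzero] at h1
    simpa using h1
  intro s
  have hconst : u s * PT (Λ s) (Λ s) * (u s)ᴴ = u 0 * PT (Λ 0) (Λ 0) * (u 0)ᴴ := by
    ext j k
    exact is_const_of_deriv_eq_zero (fun t => (hG t j k).differentiableAt)
      (fun t => (hG t j k).deriv) s 0
  have hmain : u s * PT (Λ s) (Λ s) * (u s)ᴴ = PT (Λ 0) (Λ 0) := by
    rw [hconst, hu0]
    simp
  refine ⟨hmain, ?_⟩
  have htr : Matrix.trace (PT (Λ s) (Λ s) * ((u s)ᴴ * u s))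
      = Matrix.trace (u s * PT (Λ s) (Λ s) * (u s)ᴴ) := by
    rw [← Matrix.mul_assoc, Matrix.trace_mul_comm, ← Matrix.mul_assoc]
  rw [htr, hmain]
  have : Matrix.trace (PT (Λ 0) (Λ 0)) = ∑ j, (inner ℂ (Λ 0 j) (Λ 0 j) : ℂ) := rfl
  rw [this]
  have hsum : ∀ j : Fin 2, (inner ℂ (Λ 0 j) (Λ 0 j) : ℂ) = ((‖Λ 0 j‖ ^ 2 : ℝ) : ℂ) := by
    intro j
    rw [inner_self_eq_norm_sq_to_K]
    norm_cast
  simp only [hsum]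
  rw [← Complex.ofReal_sum]
  rw [← PiLp.norm_sq_eq_of_L2]
  rw [hnorm 0]
  norm_num

end
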